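/- Let Φ(ρ) = Σᵢ pᵢ Uᵢ ρ Uᵢ† be a random unitary channel on a finite-dimensional Hilbert space S whose unitary Kraus operators Uᵢ mutually commute. Then Φ has no private subspace of dimension ≥ 2: there do not exist two linearly independent unit vectors |0_L⟩, |1_L⟩ spanning a subspace C such that Φ maps the density matrices of all unit vectors in C to one fixed density matrix ρ₀. -/

import Mathlib

open Matrix

lemma dot_conj_swap {n : ℕ} (u y : Fin n → ℂ) :
    star u ⬝ᵥ y = (starRingEnd ℂ) (star y ⬝ᵥ u) := by
  simp [dotProduct, map_sum, mul_comm]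

lemma dot_vecMulVec_mulVec' {n : ℕ} (z a b y : Fin n → ℂ) :
    star z ⬝ᵥ (vecMulVec a b *ᵥ y) = (star z ⬝ᵥ a) * (b ⬝ᵥ y) := by
  simp only [dotProduct, mulVec, vecMulVec_apply, Finset.sum_mul, Finset.mul_sum]
  rw [Finset.sum_comm]
  apply Finset.sum_congr rfl; intro k _; apply Finset.sum_congr rfl; intro m _; ring

lemma aux_trace {n : ℕ} {ι : Type*} [Fintype ι]
    (p : ι → ℝ) (hp1 : ∑ i, p i = 1)
    (U : ι → Matrix (Fin n) (Fin n) ℂ) (A : Matrix (Fin n) (Fin n) ℂ)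
    (hA : ∀ i, (U i)ᴴ * A * U i = A)
    (ψ : Fin n → ℂ) :
    Matrix.trace (A * ∑ i, (p i : ℂ) • (U i * vecMulVec ψ (star ψ) * (U i)ᴴ))
      = star ψ ⬝ᵥ (A *ᵥ ψ) := by
  have key : ∀ i, Matrix.trace (A * ((p i : ℂ) • (U i * vecMulVec ψ (star ψ) * (U i)ᴴ)))
      = (p i : ℂ) * Matrix.trace (A * vecMulVec ψ (star ψ)) := by
    intro i
    rw [Matrix.mul_smul, Matrix.trace_smul, smul_eq_mul]
    congr 1
    calc Matrix.trace (A * (U i * vecMulVec ψ (star ψ) * (U i)ᴴ))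
        = Matrix.trace ((A * U i * vecMulVec ψ (star ψ)) * (U i)ᴴ) := by
          rw [← Matrix.mul_assoc, ← Matrix.mul_assoc]
      _ = Matrix.trace ((U i)ᴴ * (A * U i * vecMulVec ψ (star ψ))) := Matrix.trace_mul_comm _ _
      _ = Matrix.trace (((U i)ᴴ * A * U i) * vecMulVec ψ (star ψ)) := by
          rw [← Matrix.mul_assoc, ← Matrix.mul_assoc]
      _ = Matrix.trace (A * vecMulVec ψ (star ψ)) := by rw [hA i]
  rw [Matrix.mul_sum, Matrix.trace_sum]
  simp_rw [key, ← Finset.sum_mul]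
  have hs : (∑ i, (p i : ℂ)) = 1 := by
    rw [← Complex.ofReal_sum, hp1, Complex.ofReal_one]
  rw [hs, one_mul]
  simp only [Matrix.trace, Matrix.diag, Matrix.mul_apply, vecMulVec_apply, dotProduct, mulVec,
    Finset.mul_sum, Finset.sum_mul]
  apply Finset.sum_congr rfl; intro k _; apply Finset.sum_congr rfl; intro m _; ring

lemma aux_quad {n : ℕ} {ι : Type*} [Fintype ι]
    (p : ι → ℝ) (U : ι → Matrix (Fin n) (Fin n) ℂ) (ψ z : Fin n → ℂ) :
    star z ⬝ᵥ ((∑ i, (p i : ℂ) • (U i * vecMulVec ψ (star ψ) * (U i)ᴴ)) *ᵥ z)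
      = ∑ i, (p i : ℂ) *
          ((star z ⬝ᵥ (U i *ᵥ ψ)) * (starRingEnd ℂ) (star z ⬝ᵥ (U i *ᵥ ψ))) := by
  have h1 : ∀ i, U i * vecMulVec ψ (star ψ) * (U i)ᴴ
      = vecMulVec (U i *ᵥ ψ) (star (U i *ᵥ ψ)) := by
    intro i
    rw [star_mulVec]
    ext k m
    simp [Matrix.mul_apply, vecMulVec_apply, mulVec, vecMul, dotProduct, conjTranspose_apply,
      Finset.mul_sum, Finset.sum_mul]
    apply Finset.sum_congr rfl; intro a _; apply Finset.sum_congr rfl; intro b _; ring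
  simp_rw [h1]
  have h2 : (∑ i, (p i : ℂ) • vecMulVec (U i *ᵥ ψ) (star (U i *ᵥ ψ))) *ᵥ z
      = ∑ i, (p i : ℂ) • (vecMulVec (U i *ᵥ ψ) (star (U i *ᵥ ψ)) *ᵥ z) := by
    ext k
    simp only [mulVec, dotProduct, Finset.sum_apply, Matrix.sum_apply, Pi.smul_apply,
      Matrix.smul_apply, smul_eq_mul, Finset.sum_mul, Finset.mul_sum, mul_assoc]
    rw [Finset.sum_comm]
  have h3 : star z ⬝ᵥ (∑ i, (p i : ℂ) • (vecMulVec (U i *ᵥ ψ) (star (U i *ᵥ ψ)) *ᵥ z))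
      = ∑ i, star z ⬝ᵥ ((p i : ℂ) • (vecMulVec (U i *ᵥ ψ) (star (U i *ᵥ ψ)) *ᵥ z)) := by
    simp only [dotProduct, Finset.sum_apply, Finset.mul_sum, Pi.smul_apply, smul_eq_mul]
    rw [Finset.sum_comm]
  rw [h2, h3]
  apply Finset.sum_congr rfl; intro i _
  rw [dotProduct_smul, smul_eq_mul]
  congr 1
  rw [dot_vecMulVec_mulVec']
  congr 1
  simp [dotProduct, map_sum, mul_comm]

/-- A random unitary channel with mutually commuting unitary Kraus operators
has no private subspace of dimension ≥ 2. -/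
theorem random_unitary_commuting_no_private_subspace
    {n : ℕ} {ι : Type*} [Fintype ι]
    (p : ι → ℝ) (hp : ∀ i, 0 ≤ p i) (hp1 : ∑ i, p i = 1)
    (U : ι → Matrix (Fin n) (Fin n) ℂ)
    (hU : ∀ i, U i * (U i)ᴴ = 1 ∧ (U i)ᴴ * U i = 1)
    (hcomm : ∀ i j, U i * U j = U j * U i) :
    ¬ ∃ (v w : Fin n → ℂ) (ρ₀ : Matrix (Fin n) (Fin n) ℂ),
        star v ⬝ᵥ v = 1 ∧ star w ⬝ᵥ w = 1 ∧
        LinearIndependent ℂ ![v, w] ∧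
        ∀ ψ : Fin n → ℂ, ψ ∈ Submodule.span ℂ ({v, w} : Set (Fin n → ℂ)) →
          star ψ ⬝ᵥ ψ = 1 →
          ∑ i, (p i : ℂ) • (U i * vecMulVec ψ (star ψ) * (U i)ᴴ) = ρ₀ := by
  rintro ⟨v, w, ρ₀, hv, hw, hli, h⟩
  have memv : v ∈ Submodule.span ℂ ({v, w} : Set (Fin n → ℂ)) :=
    Submodule.subset_span (by simp)
  have memw : w ∈ Submodule.span ℂ ({v, w} : Set (Fin n → ℂ)) :=
    Submodule.subset_span (by simp)
  set c : ℂ := star v ⬝ᵥ w with hc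
  have hwv : star w ⬝ᵥ v = (starRingEnd ℂ) c := by rw [hc]; exact dot_conj_swap w v
  set x : Fin n → ℂ := w - c • v with hx
  -- basic dot product facts about x
  have hvx : star v ⬝ᵥ x = 0 := by
    rw [hx, dotProduct_sub, dotProduct_smul, hv, smul_eq_mul, mul_one, ← hc, sub_self]
  have hxv : star x ⬝ᵥ v = 0 := by
    rw [dot_conj_swap, hvx, map_zero]
  have hxw : star x ⬝ᵥ w = star x ⬝ᵥ x := by
    have e : star x ⬝ᵥ (w - c • v) = star x ⬝ᵥ w - c * (star x ⬝ᵥ v) := by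
      rw [dotProduct_sub, dotProduct_smul, smul_eq_mul]
    have e2 : star x ⬝ᵥ x = star x ⬝ᵥ (w - c • v) := by rw [← hx]
    rw [e2, e, hxv, mul_zero, sub_zero]
  have hx0 : x ≠ 0 := by
    intro h0
    obtain ⟨hw0, hvw0⟩ := linearIndependent_fin2.mp hli
    simp only [Matrix.cons_val_one, Matrix.head_cons, Matrix.cons_val_zero] at hw0 hvw0
    rw [hx] at h0
    have hwc : w = c • v := sub_eq_zero.mp h0
    by_cases hc0 : c = 0
    · exact hw0 (by rw [hwc, hc0, zero_smul])
    · exact hvw0 c⁻¹ (by rw [hwc, smul_smul, inv_mul_cancel₀ hc0, one_smul])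
  -- |c|² < 1
  have hreal : star x ⬝ᵥ x = ((∑ k, Complex.normSq (x k) : ℝ) : ℂ) := by
    push_cast
    simp [dotProduct, Complex.normSq_eq_conj_mul_self]
  have hsumpos : (0:ℝ) < ∑ k, Complex.normSq (x k) := by
    obtain ⟨k, hk⟩ := Function.ne_iff.mp hx0
    exact Finset.sum_pos' (fun j _ => Complex.normSq_nonneg _)
      ⟨k, Finset.mem_univ k, Complex.normSq_pos.mpr hk⟩
  have hxx0 : star x ⬝ᵥ x ≠ 0 := by
    rw [hreal, Ne, Complex.ofReal_eq_zero]
    exact ne_of_gt hsumpos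
  have hstarx : star x = star w - (starRingEnd ℂ) c • star v := by
    rw [hx, star_sub, star_smul]
    rfl
  have hval : star x ⬝ᵥ x = 1 - (starRingEnd ℂ) c * c := by
    rw [← hxw, hstarx, sub_dotProduct, smul_dotProduct, hw, ← hc, smul_eq_mul]
  have hnormc : Complex.normSq c < 1 := by
    have e1 : ((∑ k, Complex.normSq (x k) : ℝ) : ℂ) = ((1 - Complex.normSq c : ℝ) : ℂ) := by
      rw [← hreal, hval]
      push_cast
      rw [mul_comm, Complex.mul_conj]
    have e2 : (∑ k, Complex.normSq (x k) : ℝ) = 1 - Complex.normSq c :=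
      Complex.ofReal_inj.mp e1
    linarith [hsumpos]
  have hre : |c.re| < 1 := by
    have := Complex.normSq_apply c
    nlinarith [sq_nonneg c.re, sq_nonneg c.im, abs_nonneg c.re, sq_abs c.re]
  have him : |c.im| < 1 := by
    have := Complex.normSq_apply c
    nlinarith [sq_nonneg c.re, sq_nonneg c.im, abs_nonneg c.im, sq_abs c.im]
  -- positive normalizers
  have hre' := abs_lt.mp hre
  have him' := abs_lt.mp him
  set T₁ : ℝ := 2 + 2*c.re with hT₁def
  have hT₁pos : 0 < T₁ := by rw [hT₁def]; linarith [hre'.1]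
  set T₂ : ℝ := 2 - 2*c.im with hT₂def
  have hT₂pos : 0 < T₂ := by rw [hT₂def]; linarith [him'.2]
  set a₁ : ℂ := ((Real.sqrt T₁ : ℝ) : ℂ)⁻¹ with ha₁def
  set a₂ : ℂ := ((Real.sqrt T₂ : ℝ) : ℂ)⁻¹ with ha₂def
  have ha₁star : star a₁ = a₁ := by
    rw [ha₁def, star_inv₀, Complex.star_def, Complex.conj_ofReal]
  have ha₂star : star a₂ = a₂ := by
    rw [ha₂def, star_inv₀, Complex.star_def, Complex.conj_ofReal]
  have ha₁sq : a₁ * a₁ * (T₁ : ℂ) = 1 := by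
    have hr : ((Real.sqrt T₁)⁻¹ * (Real.sqrt T₁)⁻¹ * T₁ : ℝ) = 1 := by
      rw [← Real.mul_self_sqrt hT₁pos.le]
      have := Real.sqrt_ne_zero'.mpr hT₁pos
      field_simp
      rw [Real.sqrt_sq (Real.sqrt_nonneg _)]
    calc a₁ * a₁ * (T₁ : ℂ) = (((Real.sqrt T₁)⁻¹ * (Real.sqrt T₁)⁻¹ * T₁ : ℝ) : ℂ) := by
          rw [ha₁def]; push_cast; ring
      _ = 1 := by rw [hr]; norm_num
  have ha₂sq : a₂ * a₂ * (T₂ : ℂ) = 1 := by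
    have hr : ((Real.sqrt T₂)⁻¹ * (Real.sqrt T₂)⁻¹ * T₂ : ℝ) = 1 := by
      rw [← Real.mul_self_sqrt hT₂pos.le]
      have := Real.sqrt_ne_zero'.mpr hT₂pos
      field_simp
      rw [Real.sqrt_sq (Real.sqrt_nonneg _)]
    calc a₂ * a₂ * (T₂ : ℂ) = (((Real.sqrt T₂)⁻¹ * (Real.sqrt T₂)⁻¹ * T₂ : ℝ) : ℂ) := by
          rw [ha₂def]; push_cast; ring
      _ = 1 := by rw [hr]; norm_num
  -- cast identities for T₁ T₂
  have hac : c + (starRingEnd ℂ) c = 2 * (c.re : ℂ) := by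
    rw [Complex.add_conj]; push_cast; ring
  have hsc : c - (starRingEnd ℂ) c = 2 * (c.im : ℂ) * Complex.I := by
    rw [Complex.sub_conj]; push_cast; ring
  have hT1c : ((T₁ : ℝ) : ℂ) = 2 + (c + (starRingEnd ℂ) c) := by
    rw [hT₁def]
    push_cast
    linear_combination -hac
  have hT2c : ((T₂ : ℝ) : ℂ) = 2 + Complex.I * (c - (starRingEnd ℂ) c) := by
    rw [hT₂def]
    push_cast
    linear_combination (-Complex.I) * hsc + (-2*(c.im : ℂ)) * Complex.I_mul_I
  -- dot products of the combined vectors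
  have hd1 : star (v + w) ⬝ᵥ (v + w) = ((T₁ : ℝ) : ℂ) := by
    rw [star_add, add_dotProduct, dotProduct_add, dotProduct_add, hv, hw, hwv, ← hc, hT1c]
    ring
  have hd2 : star (v + Complex.I • w) ⬝ᵥ (v + Complex.I • w) = ((T₂ : ℝ) : ℂ) := by
    rw [star_add, star_smul, add_dotProduct, dotProduct_add, dotProduct_add, smul_dotProduct,
      smul_dotProduct, dotProduct_smul, dotProduct_smul, hv, hw, hwv, ← hc, hT2c]
    simp only [smul_eq_mul, Complex.star_def, Complex.conj_I]
    linear_combination (-1 : ℂ) * Complex.I_mul_I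
  -- the two auxiliary unit vectors
  have unit₁ : star (a₁ • (v + w)) ⬝ᵥ (a₁ • (v + w)) = 1 := by
    rw [star_smul, smul_dotProduct, dotProduct_smul, hd1, ha₁star, smul_eq_mul, smul_eq_mul]
    linear_combination ha₁sq
  have unit₂ : star (a₂ • (v + Complex.I • w)) ⬝ᵥ (a₂ • (v + Complex.I • w)) = 1 := by
    rw [star_smul, smul_dotProduct, dotProduct_smul, hd2, ha₂star, smul_eq_mul, smul_eq_mul]
    linear_combination ha₂sq
  have mem₁ : a₁ • (v + w) ∈ Submodule.span ℂ ({v, w} : Set (Fin n → ℂ)) :=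
    Submodule.smul_mem _ _ (Submodule.add_mem _ memv memw)
  have mem₂ : a₂ • (v + Complex.I • w) ∈ Submodule.span ℂ ({v, w} : Set (Fin n → ℂ)) :=
    Submodule.smul_mem _ _ (Submodule.add_mem _ memv (Submodule.smul_mem _ _ memw))
  -- the key vanishing lemma
  have hkey : ∀ A : Matrix (Fin n) (Fin n) ℂ, (∀ i, (U i)ᴴ * A * U i = A) →
      star x ⬝ᵥ (A *ᵥ v) = 0 := by
    intro A hA
    have hτ : ∀ ψ : Fin n → ℂ, ψ ∈ Submodule.span ℂ ({v, w} : Set (Fin n → ℂ)) →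
        star ψ ⬝ᵥ ψ = 1 → star ψ ⬝ᵥ (A *ᵥ ψ) = Matrix.trace (A * ρ₀) := by
      intro ψ hm hu
      rw [← aux_trace p hp1 U A hA ψ, h ψ hm hu]
    set τ : ℂ := Matrix.trace (A * ρ₀) with hτdef
    set Bvv : ℂ := star v ⬝ᵥ (A *ᵥ v) with hBvv
    set Bvw : ℂ := star v ⬝ᵥ (A *ᵥ w) with hBvw
    set Bwv : ℂ := star w ⬝ᵥ (A *ᵥ v) with hBwv
    set Bww : ℂ := star w ⬝ᵥ (A *ᵥ w) with hBww
    have e1 : Bvv = τ := hτ v memv hv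
    have e2 : Bww = τ := hτ w memw hw
    have q3 : star (v + w) ⬝ᵥ (A *ᵥ (v + w)) = Bvv + Bvw + Bwv + Bww := by
      simp only [star_add, Matrix.mulVec_add, add_dotProduct, dotProduct_add,
        ← hBvv, ← hBvw, ← hBwv, ← hBww]
      ring
    have q4 : star (v + Complex.I • w) ⬝ᵥ (A *ᵥ (v + Complex.I • w))
        = Bvv + Complex.I * Bvw - Complex.I * Bwv + Bww := by
      simp only [star_add, star_smul, Matrix.mulVec_add, Matrix.mulVec_smul, add_dotProduct,
        dotProduct_add, smul_dotProduct, dotProduct_smul, smul_eq_mul,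
        ← hBvv, ← hBvw, ← hBwv, ← hBww]
      simp only [smul_eq_mul, Complex.star_def, Complex.conj_I]
      linear_combination (-Bww) * Complex.I_mul_I
    have f3 : Bvv + Bvw + Bwv + Bww = (2 + (c + (starRingEnd ℂ) c)) * τ := by
      have e3 := hτ _ mem₁ unit₁
      rw [star_smul, smul_dotProduct, Matrix.mulVec_smul, dotProduct_smul, q3, ha₁star,
        smul_eq_mul, smul_eq_mul] at e3
      rw [← hT1c]
      linear_combination (-(Bvv + Bvw + Bwv + Bww)) * ha₁sq + (T₁ : ℂ) * e3
    have f4 : Bvv + Complex.I * Bvw - Complex.I * Bwv + Bww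
        = (2 + Complex.I * (c - (starRingEnd ℂ) c)) * τ := by
      have e4 := hτ _ mem₂ unit₂
      rw [star_smul, smul_dotProduct, Matrix.mulVec_smul, dotProduct_smul, q4, ha₂star,
        smul_eq_mul, smul_eq_mul] at e4
      rw [← hT2c]
      linear_combination (-(Bvv + Complex.I * Bvw - Complex.I * Bwv + Bww)) * ha₂sq
        + (T₂ : ℂ) * e4
    have g3 : Bvw + Bwv = (c + (starRingEnd ℂ) c) * τ := by
      linear_combination f3 - e1 - e2
    have g4' : Complex.I * (Bvw - Bwv) = Complex.I * ((c - (starRingEnd ℂ) c) * τ) := by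
      linear_combination f4 - e1 - e2
    have g4 : Bvw - Bwv = (c - (starRingEnd ℂ) c) * τ := mul_left_cancel₀ Complex.I_ne_zero g4'
    have gBwv : Bwv = (starRingEnd ℂ) c * τ := by
      linear_combination (1/2 : ℂ) * g3 - (1/2 : ℂ) * g4
    rw [hstarx, sub_dotProduct, smul_dotProduct, smul_eq_mul, ← hBwv, ← hBvv]
    linear_combination gBwv - (starRingEnd ℂ) c * e1
  -- pick an index with positive weight
  have hsum1 : (∑ i, p i) ≠ 0 := by rw [hp1]; norm_num
  obtain ⟨i₀, -, hi₀⟩ := Finset.exists_ne_zero_of_sum_ne_zero hsum1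
  have hpi₀ : 0 < p i₀ := lt_of_le_of_ne (hp i₀) (Ne.symm hi₀)
  set z : Fin n → ℂ := U i₀ *ᵥ x with hz
  have hAcomm : ∀ j i, (U i)ᴴ * ((U i₀)ᴴ * U j) * U i = (U i₀)ᴴ * U j := by
    intro j i
    have hdag : (U i)ᴴ * (U i₀)ᴴ = (U i₀)ᴴ * (U i)ᴴ := by
      calc (U i)ᴴ * (U i₀)ᴴ = (U i₀ * U i)ᴴ := by rw [conjTranspose_mul]
        _ = (U i * U i₀)ᴴ := by rw [hcomm]
        _ = (U i₀)ᴴ * (U i)ᴴ := by rw [conjTranspose_mul]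
    calc (U i)ᴴ * ((U i₀)ᴴ * U j) * U i
        = ((U i)ᴴ * (U i₀)ᴴ) * (U j * U i) := by
          simp only [Matrix.mul_assoc]
      _ = ((U i₀)ᴴ * (U i)ᴴ) * (U i * U j) := by rw [hdag, hcomm]
      _ = (U i₀)ᴴ * (((U i)ᴴ * U i) * U j) := by
          simp only [Matrix.mul_assoc]
      _ = (U i₀)ᴴ * U j := by rw [(hU i).2, Matrix.one_mul]
  have hzs : ∀ (M : Matrix (Fin n) (Fin n) ℂ) (y : Fin n → ℂ),
      star z ⬝ᵥ (M *ᵥ y) = star x ⬝ᵥ (((U i₀)ᴴ * M) *ᵥ y) := by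
    intro M y
    rw [hz, star_mulVec, dotProduct_mulVec, Matrix.vecMul_vecMul, ← dotProduct_mulVec]
  have hzv : ∀ j, star z ⬝ᵥ (U j *ᵥ v) = 0 := by
    intro j
    rw [hzs]
    exact hkey _ (hAcomm j)
  -- ρ₀ kills z (computed from v)
  have hρz : star z ⬝ᵥ (ρ₀ *ᵥ z) = 0 := by
    rw [← h v memv hv, aux_quad]
    apply Finset.sum_eq_zero
    intro j _
    rw [hzv j]
    ring
  -- ρ₀ from w : a sum of nonnegative reals equals zero
  have hρw : star z ⬝ᵥ (ρ₀ *ᵥ z)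
      = ∑ i, ((p i * Complex.normSq (star z ⬝ᵥ (U i *ᵥ w)) : ℝ) : ℂ) := by
    rw [← h w memw hw, aux_quad]
    apply Finset.sum_congr rfl
    intro i _
    rw [Complex.mul_conj]
    push_cast
    ring
  have hsum0 : ∑ i, (p i * Complex.normSq (star z ⬝ᵥ (U i *ᵥ w))) = (0:ℝ) := by
    have : ((∑ i, (p i * Complex.normSq (star z ⬝ᵥ (U i *ᵥ w))) : ℝ) : ℂ) = 0 := by
      rw [Complex.ofReal_sum, ← hρw]
      exact hρz
    exact_mod_cast this
  have hterm : p i₀ * Complex.normSq (star z ⬝ᵥ (U i₀ *ᵥ w)) = 0 :=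
    (Finset.sum_eq_zero_iff_of_nonneg
      (fun i _ => mul_nonneg (hp i) (Complex.normSq_nonneg _))).mp hsum0 i₀ (Finset.mem_univ i₀)
  have hzero : star z ⬝ᵥ (U i₀ *ᵥ w) = 0 := by
    have := (mul_eq_zero.mp hterm).resolve_left (ne_of_gt hpi₀)
    exact Complex.normSq_eq_zero.mp this
  -- but this quantity is star x ⬝ᵥ x ≠ 0
  have hfinal : star z ⬝ᵥ (U i₀ *ᵥ w) = star x ⬝ᵥ x := by
    rw [hzs, (hU i₀).2, Matrix.one_mulVec, hxw]
  exact hxx0 (by rw [← hfinal, hzero])
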